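/- arXiv:2309.09370 — 3 statements merged into one kernel-verified Lean document; each statement's English description precedes it below -/
import Mathlib

section
/- Let C be a linear subspace of F_2^M all of whose nonzero elements have even Hamming weight at least 2N+2, with 2N+2 ≤ M. Then the dimension of C satisfies dim C ≤ M - 1 - log₂(∑_{j=0}^{⌊N/2⌋} C(M, 2j)), where C(M,k) denotes binomial coefficients; equivalently, 2^(dim C) · ∑_{j=0}^{⌊N/2⌋} C(M, 2j) ≤ 2^(M-1). -/
open Finset

lemma zmod2_eq_one {x : ZMod 2} (h : x ≠ 0) : x = 1 := by revert h; revert x; decide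

lemma parity_sum {M : ℕ} (v : Fin M → ZMod 2) :
    Even (hammingNorm v) ↔ ∑ i, v i = 0 := by
  have h : ∑ i, v i = (hammingNorm v : ZMod 2) := by
    rw [hammingNorm, ← Finset.sum_filter_ne_zero]
    rw [Finset.sum_congr rfl (fun i hi => zmod2_eq_one (Finset.mem_filter.mp hi).2)]
    simp [Finset.sum_const]
  rw [h]
  constructor
  · rintro ⟨k, hk⟩; rw [hk]; push_cast; rw [← two_mul, show (2:ZMod 2) = 0 from rfl, zero_mul]
  · intro h0
    have := (ZMod.natCast_eq_zero_iff (hammingNorm v) 2).mp h0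
    exact (even_iff_two_dvd).mpr this

lemma card_norm_eq (M k : ℕ) :
    ({v : Fin M → ZMod 2 | hammingNorm v = k} : Finset _).card = M.choose k := by
  have hp := Finset.card_powersetCard k (Finset.univ : Finset (Fin M))
  rw [Finset.card_fin] at hp
  rw [← hp]
  refine Finset.card_bij' (fun v _ => ({i | v i ≠ 0} : Finset (Fin M)))
      (fun s _ => fun i => if i ∈ s then 1 else 0) ?_ ?_ ?_ ?_
  · intro v hv
    simp only [Finset.mem_filter, Finset.mem_univ, true_and] at hv
    simp [Finset.mem_powersetCard, ← hv, hammingNorm]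
  · intro s hs
    simp only [Finset.mem_powersetCard] at hs
    simp only [Finset.mem_filter, Finset.mem_univ, true_and, hammingNorm]
    rw [← hs.2]
    congr 1
    ext i
    simp
  · intro v hv
    funext i
    by_cases h : v i = 0
    · simp [h]
    · simp [h, zmod2_eq_one h]
  · intro s hs
    ext i
    simp

lemma card_even_set (M : ℕ) (hM : 1 ≤ M) :
    ({v : Fin M → ZMod 2 | ∑ i, v i = 0} : Finset _).card = 2 ^ (M - 1) := by
  have h2 : 2 ^ M = 2 * 2 ^ (M - 1) := by
    conv_lhs => rw [show M = M - 1 + 1 from by omega]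
    rw [pow_succ']
  set e : Fin M → ZMod 2 := Pi.single ⟨0, hM⟩ 1 with he
  have hse : ∑ i, e i = 1 := by simp [he]
  have key : ∀ v : Fin M → ZMod 2, ∑ i, (v + e) i = (∑ i, v i) + 1 := by
    intro v; simp [Finset.sum_add_distrib, hse]
  clear_value e
  have hcb : ({v : Fin M → ZMod 2 | ∑ i, v i = 0} : Finset _).card =
      ({v : Fin M → ZMod 2 | ¬ (∑ i, v i = 0)} : Finset _).card := by
    refine Finset.card_bij' (fun v _ => v + e) (fun v _ => v + e) ?_ ?_ ?_ ?_
    · intro v hv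
      simp only [Finset.mem_filter, Finset.mem_univ, true_and] at hv ⊢
      rw [key, hv]; decide
    · intro v hv
      simp only [Finset.mem_filter, Finset.mem_univ, true_and] at hv ⊢
      rw [key]
      have : ∑ i, v i = 1 := zmod2_eq_one hv
      rw [this]; decide
    · intro v _
      funext i
      simp [add_assoc, CharTwo.add_self_eq_zero]
    · intro v _
      funext i
      simp [add_assoc, CharTwo.add_self_eq_zero]
  have htot : ({v : Fin M → ZMod 2 | ∑ i, v i = 0} : Finset _).card
      + ({v : Fin M → ZMod 2 | ¬ (∑ i, v i = 0)} : Finset _).card = 2 ^ M := by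
    have h := Finset.card_filter_add_card_filter_not
      (s := (Finset.univ : Finset (Fin M → ZMod 2)))
      (p := fun v => ∑ i, v i = 0)
    simpa [Finset.card_univ] using h
  rw [← hcb] at htot
  generalize hG : ({v : Fin M → ZMod 2 | ∑ i, v i = 0} : Finset _).card = A at htot ⊢
  clear * - htot h2
  omega

lemma card_ball (M N : ℕ) :
    ({v : Fin M → ZMod 2 | hammingNorm v ≤ 2 * (N / 2) ∧ Even (hammingNorm v)} : Finset _).card
      = ∑ j ∈ Finset.range (N / 2 + 1), M.choose (2 * j) := by
  have hB : ({v : Fin M → ZMod 2 | hammingNorm v ≤ 2 * (N / 2) ∧ Even (hammingNorm v)} : Finset _)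
      = (Finset.range (N / 2 + 1)).biUnion
        (fun j => ({v : Fin M → ZMod 2 | hammingNorm v = 2 * j} : Finset _)) := by
    ext v
    simp only [Finset.mem_filter, Finset.mem_univ, true_and, Finset.mem_biUnion,
      Finset.mem_range]
    constructor
    · rintro ⟨hle, j, hj⟩
      exact ⟨j, by omega, by omega⟩
    · rintro ⟨j, hj, hv⟩
      exact ⟨by omega, j, by omega⟩
  rw [hB, Finset.card_biUnion]
  · exact Finset.sum_congr rfl fun j _ => card_norm_eq M (2 * j)
  · intro j1 _ j2 _ hne
    rw [Function.onFun, Finset.disjoint_left]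
    intro v h1 h2
    simp only [Finset.mem_filter, Finset.mem_univ, true_and] at h1 h2
    omega

/-- Hamming bound for even-weight codes: if every nonzero element of a linear
subspace `C` of `F_2^M` has even Hamming weight at least `2N+2` (with `2N+2 ≤ M`), then
`2^(dim C) · ∑_{j=0}^{⌊N/2⌋} C(M, 2j) ≤ 2^(M-1)`. -/
theorem stmt3 (M N : ℕ) (hNM : 2 * N + 2 ≤ M)
    (C : Submodule (ZMod 2) (Fin M → ZMod 2))
    (hC : ∀ v ∈ C, v ≠ 0 → Even (hammingNorm v) ∧ 2 * N + 2 ≤ hammingNorm v) :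
    2 ^ (Module.finrank (ZMod 2) C) *
        (∑ j ∈ Finset.range (N / 2 + 1), M.choose (2 * j)) ≤ 2 ^ (M - 1) := by
  classical
  let V := Fin M → ZMod 2
  set CF : Finset V := (C : Set V).toFinset with hCF
  set B : Finset V :=
    ({v : V | hammingNorm v ≤ 2 * (N / 2) ∧ Even (hammingNorm v)} : Finset _) with hBdef
  set Eset : Finset V := ({v : V | ∑ i, v i = 0} : Finset _) with hEdef
  have hmemCF : ∀ c, c ∈ CF ↔ c ∈ C := by
    intro c; rw [hCF, Set.mem_toFinset]; rfl
  have hdist : ∀ c e : V, hammingDist c (c + e) = hammingNorm e := by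
    intro c e
    rw [hammingDist_eq_hammingNorm, neg_add_cancel_left]
  -- injectivity
  have hinj : Set.InjOn (fun p : V × V => p.1 + p.2) ↑(CF ×ˢ B) := by
    rintro ⟨c1, e1⟩ hp1 ⟨c2, e2⟩ hp2 h
    simp only [Finset.coe_product, Set.mem_prod] at hp1 hp2
    simp only at h
    have hc1 : c1 ∈ C := (hmemCF c1).mp hp1.1
    have hc2 : c2 ∈ C := (hmemCF c2).mp hp2.1
    have he1 : hammingNorm e1 ≤ 2 * (N / 2) := by
      have := hp1.2; rw [hBdef] at this
      simpa using (Finset.mem_filter.mp this).2.1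
    have he2 : hammingNorm e2 ≤ 2 * (N / 2) := by
      have := hp2.2; rw [hBdef] at this
      simpa using (Finset.mem_filter.mp this).2.1
    have hd : hammingDist c1 c2 ≤ hammingNorm e1 + hammingNorm e2 := by
      calc hammingDist c1 c2 ≤ hammingDist c1 (c1 + e1) + hammingDist (c1 + e1) c2 :=
            hammingDist_triangle _ _ _
        _ = hammingNorm e1 + hammingNorm e2 := by
            rw [hdist, h, hammingDist_comm, hdist]
    have hcc : c1 = c2 := by
      by_contra hne
      have hsub : c1 - c2 ∈ C := sub_mem hc1 hc2
      have hnz : c1 - c2 ≠ 0 := sub_ne_zero.mpr hne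
      have := (hC _ hsub hnz).2
      rw [← neg_add_eq_sub, ← hammingDist_eq_hammingNorm, hammingDist_comm] at this
      omega
    subst hcc
    have : e1 = e2 := by
      have := add_left_cancel h
      exact this
    subst this
    rfl
  set T : Finset V := (CF ×ˢ B).image (fun p => p.1 + p.2) with hT
  have hcardT : T.card = CF.card * B.card := by
    rw [hT, Finset.card_image_of_injOn hinj, Finset.card_product]
  have hsubT : T ⊆ Eset := by
    intro v hv
    rw [hT, Finset.mem_image] at hv
    obtain ⟨⟨c, e⟩, hp, rfl⟩ := hv
    rw [Finset.mem_product] at hp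
    have hc : c ∈ C := (hmemCF c).mp hp.1
    have hevc : Even (hammingNorm c) := by
      by_cases h0 : c = 0
      · simp [h0]
      · exact (hC c hc h0).1
    have heve : Even (hammingNorm e) := by
      have := hp.2; rw [hBdef] at this
      simpa using (Finset.mem_filter.mp this).2.2
    rw [hEdef]
    simp only [Finset.mem_filter, Finset.mem_univ, true_and]
    have h1 := (parity_sum c).mp hevc
    have h2 := (parity_sum e).mp heve
    calc ∑ i, (c + e) i = (∑ i, c i) + ∑ i, e i := by
          rw [← Finset.sum_add_distrib]
          exact Finset.sum_congr rfl fun i _ => rfl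
      _ = 0 := by rw [h1, h2, add_zero]
  have hM1 : 1 ≤ M := by omega
  have hE : Eset.card = 2 ^ (M - 1) := card_even_set M hM1
  have hB : B.card = ∑ j ∈ Finset.range (N / 2 + 1), M.choose (2 * j) := card_ball M N
  have hCFcard : CF.card = 2 ^ (Module.finrank (ZMod 2) C) := by
    rw [hCF, Set.toFinset_card]
    have := Module.card_eq_pow_finrank (K := ZMod 2) (V := C)
    rw [ZMod.card 2] at this
    exact this
  calc 2 ^ (Module.finrank (ZMod 2) C) * (∑ j ∈ Finset.range (N / 2 + 1), M.choose (2 * j))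
      = CF.card * B.card := by rw [hCFcard, hB]
    _ = T.card := hcardT.symm
    _ ≤ Eset.card := Finset.card_le_card hsubT
    _ = 2 ^ (M - 1) := hE
end

section
/- For M ≥ 2N and N ≥ 1, there exists a linear map G : F_2^M → F_2^Q with Q ≤ ⌈2N·log₂ M⌉ that is injective on the set of vectors of Hamming weight exactly N. -/
open Finset

lemma sumadd (M : ℕ) (w : Fin M → ZMod 2) (j : Fin M) (v : Fin M → ZMod 2) :
    ∑ i, (w + Pi.single j 1 : Fin M → ZMod 2) i * v i = (∑ i, w i * v i) + v j := by
  simp only [Pi.add_apply, add_mul, Finset.sum_add_distrib]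
  congr 1
  rw [Finset.sum_eq_single j] <;> simp +contextual [Pi.single_apply]

lemma kercount (M : ℕ) (v : Fin M → ZMod 2) (hv : v ≠ 0) :
    (univ.filter (fun w : Fin M → ZMod 2 => ∑ i, w i * v i = 0)).card * 2 = 2 ^ M := by
  obtain ⟨j, hj⟩ : ∃ j, v j ≠ 0 := Function.ne_iff.mp hv
  have hv1 : v j = 1 := by
    have : ∀ a : ZMod 2, a ≠ 0 → a = 1 := by decide
    exact this _ hj
  have key : (univ.filter (fun w : Fin M → ZMod 2 => ∑ i, w i * v i = 0)).card
      = (univ.filter (fun w : Fin M → ZMod 2 => ¬ ∑ i, w i * v i = 0)).card := by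
    apply Finset.card_bij (fun w _ => (w + Pi.single j 1 : Fin M → ZMod 2))
    · intro w hw
      simp only [mem_filter, mem_univ, true_and] at hw ⊢
      rw [sumadd, hw, hv1, zero_add]
      decide
    · intro a _ b _ h
      exact add_right_cancel h
    · intro w hw
      refine ⟨(w + Pi.single j 1 : Fin M → ZMod 2), ?_, ?_⟩
      · simp only [mem_filter, mem_univ, true_and] at hw ⊢
        rw [sumadd, hv1]
        have h2 : ∀ a : ZMod 2, a ≠ 0 → a + 1 = 0 := by decide
        exact h2 _ hw
      · rw [add_assoc, ← Pi.single_add]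
        have : (1 + 1 : ZMod 2) = 0 := by decide
        rw [this, Pi.single_zero, add_zero]
  have := Finset.card_filter_add_card_filter_not (s := (univ : Finset (Fin M → ZMod 2)))
    (p := fun w => ∑ i, w i * v i = 0)
  rw [← key] at this
  have hcard : Fintype.card (Fin M → ZMod 2) = 2 ^ M := by simp
  simp only [card_univ, hcard] at this
  rw [mul_two]
  exact this

lemma exists_avoid (M : ℕ) : ∀ Q : ℕ, ∀ B : Finset (Fin M → ZMod 2),
    (0 : Fin M → ZMod 2) ∉ B → B.card < 2 ^ Q →
    ∃ G : (Fin M → ZMod 2) →ₗ[ZMod 2] (Fin Q → ZMod 2), ∀ v ∈ B, G v ≠ 0 := by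
  intro Q
  induction Q with
  | zero =>
    intro B h0 hB
    refine ⟨0, fun v hv => ?_⟩
    simp only [pow_zero, Nat.lt_one_iff, Finset.card_eq_zero] at hB
    simp [hB] at hv
  | succ Q ih =>
    intro B h0 hB
    -- averaging: find w with small intersection
    have havg : ∃ w : Fin M → ZMod 2,
        (B.filter (fun v => ∑ i, w i * v i = 0)).card * 2 ≤ B.card := by
      by_contra hc
      push_neg at hc
      have hsum : ∑ w : Fin M → ZMod 2,
          (B.filter (fun v => ∑ i, w i * v i = 0)).card * 2 = B.card * 2 ^ M := by
        have step : ∀ w : Fin M → ZMod 2,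
            (B.filter (fun v => ∑ i, w i * v i = 0)).card
              = ∑ v ∈ B, if ∑ i, w i * v i = 0 then 1 else 0 :=
          fun w => Finset.card_filter _ _
        simp only [step, ← Finset.sum_mul, Finset.sum_comm (s := Finset.univ) (t := B)]
        rw [Finset.sum_mul]
        have : ∀ v ∈ B, (∑ w : Fin M → ZMod 2,
            if ∑ i, w i * v i = 0 then 1 else 0) * 2 = 2 ^ M := by
          intro v hv
          have hv0 : v ≠ 0 := fun h => h0 (h ▸ hv)
          rw [← Finset.card_filter]
          exact kercount M v hv0
        rw [Finset.sum_congr rfl this, Finset.sum_const, smul_eq_mul]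
      have hle : ∑ w : Fin M → ZMod 2, (B.card + 1)
          ≤ ∑ w : Fin M → ZMod 2,
            (B.filter (fun v => ∑ i, w i * v i = 0)).card * 2 :=
        Finset.sum_le_sum (fun w _ => hc w)
      rw [hsum, Finset.sum_const, smul_eq_mul, Finset.card_univ] at hle
      have hcard : Fintype.card (Fin M → ZMod 2) = 2 ^ M := by simp
      rw [hcard, mul_comm (B.card) (2 ^ M)] at hle
      have := Nat.le_of_mul_le_mul_left hle (Nat.pos_of_ne_zero (by positivity))
      exact Nat.not_succ_le_self _ this
    obtain ⟨w, hw⟩ := havg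
    set B' := B.filter (fun v => ∑ i, w i * v i = 0) with hB'
    have hcard' : B'.card < 2 ^ Q := by
      have h2 : (2:ℕ) ^ (Q+1) = 2 ^ Q * 2 := by ring
      obtain ⟨c, hc⟩ : ∃ c, B'.card = c := ⟨_, rfl⟩
      obtain ⟨d, hd⟩ : ∃ d, B.card = d := ⟨_, rfl⟩
      rw [hc] at hw ⊢
      rw [hd] at hw hB
      omega
    obtain ⟨G', hG'⟩ := ih B' (fun h => h0 (Finset.mem_filter.mp h).1) hcard'
    set f : (Fin M → ZMod 2) →ₗ[ZMod 2] ZMod 2 := ∑ i, w i • LinearMap.proj i with hf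
    have hfapp : ∀ v, f v = ∑ i, w i * v i := by
      intro v
      simp [hf, LinearMap.sum_apply]
    refine ⟨LinearMap.pi (fun k : Fin (Q+1) =>
      Fin.cases f (fun j => (LinearMap.proj j) ∘ₗ G') k), ?_⟩
    intro v hv h
    have h0' : f v = 0 := by
      have := congrFun h 0
      simpa [LinearMap.pi_apply] using this
    have hvB' : v ∈ B' := Finset.mem_filter.mpr ⟨hv, by rw [← hfapp]; exact h0'⟩
    obtain ⟨j, hj⟩ := Function.ne_iff.mp (hG' v hvB')
    have := congrFun h j.succ
    simp only [LinearMap.pi_apply, Fin.cases_succ, LinearMap.comp_apply,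
      LinearMap.proj_apply, Pi.zero_apply] at this
    exact hj this

lemma badcount (M K : ℕ) (hK : 2 ≤ K) (hKM : K ≤ M) :
    (univ.filter (fun v : Fin M → ZMod 2 => v ≠ 0 ∧ hammingNorm v ≤ K)).card < M ^ K := by
  have h0M : 0 < M := by omega
  have h1M : 1 < M := by omega
  set supp : (Fin M → ZMod 2) → Finset (Fin M) := fun v => univ.filter (fun i => v i ≠ 0)
    with hsupp
  have hnorm : ∀ v : Fin M → ZMod 2, hammingNorm v = (supp v).card := by
    intro v; rfl
  set enc : (Fin M → ZMod 2) → (Fin K → Fin M) := fun v i =>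
    ((supp v).sort (· ≤ ·)).getD (min i.val ((supp v).card - 1)) ⟨0, h0M⟩ with henc
  have hsupp_ne : ∀ v : Fin M → ZMod 2, v ≠ 0 → 1 ≤ (supp v).card := by
    intro v hv
    obtain ⟨j, hj⟩ := Function.ne_iff.mp hv
    exact Finset.card_pos.mpr ⟨j, by simp only [hsupp, Finset.mem_filter, Finset.mem_univ, true_and]; simpa using hj⟩
  -- image of enc v is supp v
  have himage : ∀ v : Fin M → ZMod 2, v ≠ 0 → hammingNorm v ≤ K →
      Finset.image (enc v) univ = supp v := by
    intro v hv hvK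
    have hlen : ((supp v).sort (· ≤ ·)).length = (supp v).card := Finset.length_sort _
    have hpos := hsupp_ne v hv
    apply Finset.ext
    intro a
    simp only [Finset.mem_image, Finset.mem_univ, true_and]
    constructor
    · rintro ⟨i, rfl⟩
      have hidx : min i.val ((supp v).card - 1) < ((supp v).sort (· ≤ ·)).length := by
        rw [hlen]; omega
      rw [henc]
      simp only
      rw [List.getD_eq_getElem _ _ hidx]
      exact (Finset.mem_sort _).mp (List.getElem_mem hidx)
    · intro ha
      have : a ∈ (supp v).sort (· ≤ ·) := (Finset.mem_sort _).mpr ha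
      obtain ⟨k, hk, hka⟩ := List.mem_iff_getElem.mp this
      rw [hlen] at hk
      have hkK : k < K := by rw [hnorm] at hvK; omega
      refine ⟨⟨k, hkK⟩, ?_⟩
      rw [henc]
      simp only
      have : min k ((supp v).card - 1) = k := by omega
      rw [this, List.getD_eq_getElem _ _ (by rw [hlen]; omega)]
      exact hka
  -- monotone
  have hmono : ∀ v : Fin M → ZMod 2, v ≠ 0 → Monotone (enc v) := by
    intro v hv i j hij
    have hlen : ((supp v).sort (· ≤ ·)).length = (supp v).card := Finset.length_sort _
    have hpos := hsupp_ne v hv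
    have hi : min i.val ((supp v).card - 1) < ((supp v).sort (· ≤ ·)).length := by
      rw [hlen]; omega
    have hj : min j.val ((supp v).card - 1) < ((supp v).sort (· ≤ ·)).length := by
      rw [hlen]; omega
    rw [henc]
    simp only
    rw [List.getD_eq_getElem _ _ hi, List.getD_eq_getElem _ _ hj]
    have hsorted : List.Pairwise (· ≤ ·) ((supp v).sort (· ≤ ·)) := Finset.pairwise_sort _ _
    exact hsorted.rel_get_of_le (a := ⟨_, hi⟩) (b := ⟨_, hj⟩)
      (by simp only [Fin.mk_le_mk]; have := hij; omega)
  set t0 : Fin K → Fin M := fun i => if i.val = 0 then ⟨1, h1M⟩ else ⟨0, h0M⟩ with ht0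
  have hcard : (univ.filter (fun v : Fin M → ZMod 2 => v ≠ 0 ∧ hammingNorm v ≤ K)).card
      ≤ ((univ : Finset (Fin K → Fin M)).erase t0).card := by
    apply Finset.card_le_card_of_injOn enc
    · intro v hv
      simp only [Finset.coe_filter, Set.mem_setOf_eq, Finset.mem_univ, true_and] at hv
      apply Finset.mem_erase.mpr
      refine ⟨?_, Finset.mem_univ _⟩
      intro heq
      have h01 : enc v ⟨0, by omega⟩ ≤ enc v ⟨1, by omega⟩ :=
        hmono v hv.1 (by simp [Fin.le_def])
      rw [heq, ht0] at h01
      simp [Fin.le_def] at h01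
    · intro v hv v' hv' heq
      simp only [Finset.coe_filter, Set.mem_setOf_eq, Finset.mem_univ, true_and] at hv hv'
      have hs : supp v = supp v' := by
        rw [← himage v hv.1 hv.2, ← himage v' hv'.1 hv'.2, heq]
      funext i
      have h2 : ∀ a : ZMod 2, a ≠ 0 → a = 1 := by decide
      have hmem : (i ∈ supp v) ↔ (i ∈ supp v') := by rw [hs]
      simp only [hsupp, Finset.mem_filter, Finset.mem_univ, true_and] at hmem
      by_cases hvi : v i = 0
      · by_cases hv'i : v' i = 0
        · rw [hvi, hv'i]
        · exact absurd (hmem.mpr hv'i) (by simp [hvi])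
      · have hv'i : v' i ≠ 0 := hmem.mp hvi
        rw [h2 _ hvi, h2 _ hv'i]
  have hcard2 : ((univ : Finset (Fin K → Fin M)).erase t0).card = M ^ K - 1 := by
    rw [Finset.card_erase_of_mem (Finset.mem_univ _), Finset.card_univ]
    congr 1
    simp [Fintype.card_fun]
  have hMK : 0 < M ^ K := Nat.pow_pos h0M
  omega


/-- For `M ≥ 2N` and `N ≥ 1`, there exists a linear map `G : F_2^M → F_2^Q`
with `Q ≤ ⌈2N·log₂ M⌉ = ⌈log₂ (M^(2N))⌉` that is injective on the set of vectors of
Hamming weight exactly `N`. -/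
theorem stmt6 (M N : ℕ) (hN : 1 ≤ N) (hM : 2 * N ≤ M) :
    ∃ (Q : ℕ) (G : (Fin M → ZMod 2) →ₗ[ZMod 2] (Fin Q → ZMod 2)),
      Q ≤ Nat.clog 2 (M ^ (2 * N)) ∧
      ∀ b b' : Fin M → ZMod 2, hammingNorm b = N → hammingNorm b' = N →
        G b = G b' → b = b' := by
  set Q := Nat.clog 2 (M ^ (2 * N)) with hQ
  set B : Finset (Fin M → ZMod 2) :=
    univ.filter (fun v => v ≠ 0 ∧ hammingNorm v ≤ 2 * N) with hB
  have hK : 2 ≤ 2 * N := by omega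
  have hBcard : B.card < 2 ^ Q := by
    have h1 := badcount M (2 * N) hK hM
    have h2 : M ^ (2 * N) ≤ 2 ^ Q := Nat.le_pow_clog one_lt_two _
    exact lt_of_lt_of_le h1 h2
  have h0B : (0 : Fin M → ZMod 2) ∉ B := by simp [hB]
  obtain ⟨G, hG⟩ := exists_avoid M Q B h0B hBcard
  refine ⟨Q, G, le_refl _, ?_⟩
  intro b b' hb hb' hGbb
  by_contra hne
  have hdiff : b - b' ∈ B := by
    simp only [hB, Finset.mem_filter, Finset.mem_univ, true_and]
    refine ⟨sub_ne_zero.mpr hne, ?_⟩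
    have h1 : hammingNorm (b - b') = hammingDist b b' :=
      by rw [hammingDist_comm, hammingDist_eq_hammingNorm, neg_add_eq_sub]
    have h2 : hammingDist b b' ≤ hammingDist b 0 + hammingDist 0 b' :=
      hammingDist_triangle b 0 b'
    rw [hammingDist_zero_right, hammingDist_zero_left] at h2
    omega
  have : G (b - b') = 0 := by rw [map_sub, hGbb, sub_self]
  exact hG _ hdiff this
end

section
/- For a, b ∈ F_2^M with a ≠ 0, the operator X^a(P^b + P^(a⊕b)), when expanded in the Pauli basis, is a real linear combination of pairwise commuting Pauli strings. -/
/-- The X-string `X^a = ⊗_m X^(a[m])` acting on the computational basis of `M` qubits,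
represented as a matrix indexed by `F_2^M`: it sends `|s⟩` to `|a ⊕ s⟩`. -/
def Xstr {M : ℕ} (a : Fin M → ZMod 2) :
    Matrix (Fin M → ZMod 2) (Fin M → ZMod 2) ℂ :=
  Matrix.of fun r s => if r = a + s then 1 else 0

/-- The P-string `P^b = ⊗_m |b[m]⟩⟨b[m]|`, the rank-one projector onto `|b⟩`. -/
def Pstr {M : ℕ} (b : Fin M → ZMod 2) :
    Matrix (Fin M → ZMod 2) (Fin M → ZMod 2) ℂ :=
  Matrix.of fun r s => if r = b ∧ s = b then 1 else 0

/-- The Z-string `Z^c = ⊗_m Z^(c[m])`, diagonal with entries `(-1)^(c·r)`. -/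
def Zstr {M : ℕ} (c : Fin M → ZMod 2) :
    Matrix (Fin M → ZMod 2) (Fin M → ZMod 2) ℂ :=
  Matrix.of fun r s => if r = s then (-1 : ℂ) ^ ((dotProduct c r).val) else 0

/-- The Hermitian Pauli string indexed by symplectic data `(x, z)`:
`i^(|x ∧ z|) X^x Z^z`, the tensor product of `I, X, Y, Z` on `M` qubits. -/
noncomputable def PauliStr {M : ℕ} (x z : Fin M → ZMod 2) :
    Matrix (Fin M → ZMod 2) (Fin M → ZMod 2) ℂ :=
  (Complex.I ^ (Finset.univ.filter fun m => x m = 1 ∧ z m = 1).card) • (Xstr x * Zstr z)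

section Aux

lemma z2self (x : ZMod 2) : x + x = 0 := by revert x; decide

lemma hsgn (x y : ZMod 2) : (-1:ℂ)^((x+y).val) = (-1)^x.val * (-1)^y.val := by
  rw [← pow_add, ZMod.val_add, ← neg_one_pow_eq_pow_mod_two]

lemma vself {M : ℕ} (a : Fin M → ZMod 2) : a + a = 0 := by
  funext m; exact z2self (a m)

lemma addLeft_iff {M : ℕ} (a r s : Fin M → ZMod 2) : r = a + s ↔ a + r = s := by
  constructor
  · rintro rfl; rw [← add_assoc, vself, zero_add]
  · rintro rfl; rw [← add_assoc, vself, zero_add]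

lemma Xmul {M : ℕ} (a : Fin M → ZMod 2) (A : Matrix (Fin M → ZMod 2) (Fin M → ZMod 2) ℂ)
    (r s : Fin M → ZMod 2) :
    (Xstr a * A) r s = A (a + r) s := by
  simp only [Xstr, Matrix.mul_apply, Matrix.of_apply]
  simp_rw [addLeft_iff a r]
  simp

lemma full_sum {M : ℕ} (e : Fin M → ZMod 2) :
    ∑ c : Fin M → ZMod 2, (-1:ℂ)^((dotProduct e c).val) =
      if e = 0 then 2^M else 0 := by
  split_ifs with h
  · subst h
    simp [dotProduct, show ((0:ZMod 2)).val = 0 from rfl, Finset.card_univ,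
      Fintype.card_fun]
  · obtain ⟨j, hj⟩ : ∃ j, e j ≠ 0 := by
      by_contra hc; push_neg at hc; exact h (funext hc)
    have hej : e j = 1 := by revert hj; generalize e j = x; revert x; decide
    set F : (Fin M → ZMod 2) → ℂ := fun c => (-1:ℂ)^((dotProduct e c).val) with hF
    set v : Fin M → ZMod 2 := Pi.single j 1 with hv
    have key : ∀ c, F (c + v) = - F c := by
      intro c
      have : dotProduct e (c + v) = dotProduct e c + 1 := by
        rw [dotProduct_add, hv, dotProduct_single, hej, mul_one]
      simp only [hF, this, hsgn]
      norm_num [show ((1:ZMod 2)).val = 1 from rfl]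
    have h2 : ∑ c, F (c + v) = ∑ c, F c :=
      Fintype.sum_equiv (Equiv.addRight v) _ _ (fun c => rfl)
    rw [Finset.sum_congr rfl (fun c _ => key c), Finset.sum_neg_distrib] at h2
    have h3 : (2:ℂ) * ∑ c, F c = 0 := by linear_combination - h2
    rcases mul_eq_zero.1 h3 with h'|h'
    · norm_num at h'
    · exact h'

lemma filt_sum {M : ℕ} (a : Fin M → ZMod 2) (ha : a ≠ 0) (d : Fin M → ZMod 2) :
    ∑ c ∈ Finset.univ.filter (fun c => dotProduct a c = 0),
        (-1:ℂ)^((dotProduct d c).val) =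
      2^(M-1) * ((if d = 0 then 1 else 0) + (if d = a then 1 else 0)) := by
  have key : ∀ c : Fin M → ZMod 2,
      (-1:ℂ)^((dotProduct d c).val) + (-1:ℂ)^((dotProduct (d+a) c).val)
      = if dotProduct a c = 0 then 2 * (-1:ℂ)^((dotProduct d c).val) else 0 := by
    intro c
    rw [add_dotProduct, hsgn]
    split_ifs with h
    · rw [h]; norm_num [show ((0:ZMod 2)).val = 0 from rfl]; ring
    · have : dotProduct a c = 1 := by
        revert h; generalize dotProduct a c = x; revert x; decide
      rw [this]; norm_num [show ((1:ZMod 2)).val = 1 from rfl]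
  have h2 : ∑ c : Fin M → ZMod 2, ((-1:ℂ)^((dotProduct d c).val)
        + (-1:ℂ)^((dotProduct (d+a) c).val))
      = 2 * ∑ c ∈ Finset.univ.filter (fun c => dotProduct a c = 0),
          (-1:ℂ)^((dotProduct d c).val) := by
    rw [Finset.sum_congr rfl (fun c _ => key c), Finset.sum_ite, Finset.sum_const_zero,
      add_zero, Finset.mul_sum]
  rw [Finset.sum_add_distrib, full_sum, full_sum] at h2
  have hda : (d + a = 0) ↔ (d = a) := by
    constructor
    · intro h
      have hn : d = -a := eq_neg_of_add_eq_zero_left h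
      have : -a = a := by funext m; exact (by decide : ∀ x : ZMod 2, -x = x) (a m)
      rw [hn, this]
    · intro h; rw [h]; exact vself a
  obtain ⟨M', rfl⟩ : ∃ M', M = M' + 1 := by
    cases M with
    | zero => exact absurd (funext fun i => absurd i.2 (by omega) : a = 0) ha
    | succ n => exact ⟨n, rfl⟩
  have goal2 : (2:ℂ) * ∑ c ∈ Finset.univ.filter (fun c => dotProduct a c = 0),
      (-1:ℂ)^((dotProduct d c).val)
      = 2 * (2^(M'+1-1) * ((if d = 0 then 1 else 0) + (if d = a then 1 else 0))) := by
    rw [← h2]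
    simp only [hda, Nat.add_sub_cancel]
    split_ifs <;> ring
  exact mul_left_cancel₀ (two_ne_zero (α := ℂ)) goal2

lemma dot_card {M : ℕ} (a c : Fin M → ZMod 2) :
    dotProduct a c
      = ((Finset.univ.filter fun m => a m = 1 ∧ c m = 1).card : ZMod 2) := by
  rw [dotProduct]
  have hxy : ∀ x y : ZMod 2, x * y = if x = 1 ∧ y = 1 then 1 else 0 := by decide
  rw [Finset.sum_congr rfl (fun m _ => hxy (a m) (c m))]
  rw [Finset.sum_ite, Finset.sum_const_zero, add_zero, Finset.sum_const, nsmul_eq_mul, mul_one]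

lemma I_pow_even {k : ℕ} (h : 2 ∣ k) : (Complex.I)^k = ((-1:ℂ))^(k/2) := by
  obtain ⟨j, rfl⟩ := h
  rw [pow_mul, Complex.I_sq]
  congr 1
  omega

lemma ZXcomm {M : ℕ} (a c : Fin M → ZMod 2) (h : dotProduct a c = 0) :
    Zstr c * Xstr a = Xstr a * Zstr c := by
  ext r s
  rw [Xmul]
  simp only [Zstr, Xstr, Matrix.mul_apply, Matrix.of_apply]
  simp only [ite_mul, zero_mul, Finset.sum_ite_eq, Finset.mem_univ, if_true]
  by_cases hrs : r = a + s
  · have hrs' : a + r = s := (addLeft_iff a r s).1 hrs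
    have h2 : dotProduct c r = dotProduct c (a + r) := by
      rw [hrs, ← add_assoc, vself, zero_add, dotProduct_add,
        dotProduct_comm c a, h, zero_add]
    rw [if_pos hrs, if_pos hrs', mul_one, h2]
  · rw [if_neg hrs, if_neg (fun hc => hrs ((addLeft_iff a r s).2 hc)), mul_zero]

lemma ZZcomm {M : ℕ} (c c' : Fin M → ZMod 2) : Zstr c * Zstr c' = Zstr c' * Zstr c := by
  ext r s
  simp only [Zstr, Matrix.mul_apply, Matrix.of_apply]
  simp only [ite_mul, zero_mul, Finset.sum_ite_eq, Finset.mem_univ, if_true]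
  by_cases hrs : r = s
  · subst hrs; rw [if_pos rfl, if_pos rfl]; ring
  · rw [if_neg hrs, if_neg hrs, mul_zero, mul_zero]

lemma pauli_commute {M : ℕ} (a c c' : Fin M → ZMod 2)
    (hc : dotProduct a c = 0) (hc' : dotProduct a c' = 0) :
    Commute (PauliStr a c) (PauliStr a c') := by
  have hzx : Commute (Zstr c) (Xstr a) := ZXcomm a c hc
  have hzx' : Commute (Zstr c') (Xstr a) := ZXcomm a c' hc'
  have hzz : Commute (Zstr c) (Zstr c') := ZZcomm c c'
  have hbase : Commute (Xstr a * Zstr c) (Xstr a * Zstr c') :=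
    Commute.mul_left ((Commute.refl (Xstr a)).mul_right hzx'.symm)
      (hzx.mul_right hzz)
  rw [PauliStr, PauliStr]
  exact (hbase.smul_left _).smul_right _

end Aux

/-- For `a ≠ 0`, the operator `X^a(P^b + P^(a⊕b))`, expanded in the Pauli
basis, is a real linear combination of pairwise commuting Pauli strings. -/
theorem stmt11 (M : ℕ) (a b : Fin M → ZMod 2) (ha : a ≠ 0) :
    ∃ (S : Finset ((Fin M → ZMod 2) × (Fin M → ZMod 2)))
      (coef : (Fin M → ZMod 2) × (Fin M → ZMod 2) → ℝ),
      Xstr a * (Pstr b + Pstr (a + b)) = ∑ p ∈ S, (coef p : ℂ) • PauliStr p.1 p.2 ∧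
      ∀ p ∈ S, ∀ q ∈ S, Commute (PauliStr p.1 p.2) (PauliStr q.1 q.2) := by
  classical
  set T : Finset (Fin M → ZMod 2) :=
    Finset.univ.filter (fun c => dotProduct a c = 0) with hT
  refine ⟨({a} : Finset (Fin M → ZMod 2)) ×ˢ T,
    fun p => ((-1:ℝ)^((dotProduct b p.2).val)
      * (-1)^((Finset.univ.filter fun m => a m = 1 ∧ p.2 m = 1).card / 2)) / 2^(M-1),
    ?_, ?_⟩
  · -- the expansion identity
    have key_c : ∀ c ∈ T,
        ((((-1:ℝ)^((dotProduct b c).val)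
          * (-1)^((Finset.univ.filter fun m => a m = 1 ∧ c m = 1).card / 2)) / 2^(M-1) : ℝ) : ℂ)
          • PauliStr a c
        = ((-1:ℂ)^((dotProduct b c).val) / 2^(M-1)) • (Xstr a * Zstr c) := by
      intro c hc
      have hdc : dotProduct a c = 0 := (Finset.mem_filter.1 hc).2
      have hdvd : 2 ∣ (Finset.univ.filter fun m => a m = 1 ∧ c m = 1).card := by
        rw [dot_card] at hdc
        exact (ZMod.natCast_eq_zero_iff _ 2).1 hdc
      rw [PauliStr, smul_smul, I_pow_even hdvd]
      congr 1
      push_cast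
      have h1 : ((-1:ℂ))^((Finset.univ.filter fun m => a m = 1 ∧ c m = 1).card / 2)
          * (-1)^((Finset.univ.filter fun m => a m = 1 ∧ c m = 1).card / 2) = 1 := by
        rw [← pow_add]; exact Even.neg_one_pow ⟨_, rfl⟩
      linear_combination ((-1:ℂ)^((dotProduct b c).val) / 2^(M-1)) * h1
    rw [Finset.sum_product, Finset.sum_singleton, Finset.sum_congr rfl key_c]
    -- now an entrywise computation
    ext r s
    rw [Xmul]
    rw [Matrix.sum_apply]
    simp only [Matrix.smul_apply, smul_eq_mul]
    have hent : ∀ c ∈ T, ((-1:ℂ)^((dotProduct b c).val) / 2^(M-1))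
        * (Xstr a * Zstr c) r s
        = if a + r = s then (-1:ℂ)^((dotProduct (b + s) c).val) / 2^(M-1) else 0 := by
      intro c hc
      rw [Xmul]
      simp only [Zstr, Matrix.of_apply]
      by_cases hrs : a + r = s
      · rw [if_pos hrs, if_pos hrs]
        rw [hrs, add_dotProduct, hsgn, dotProduct_comm s c]
        ring
      · rw [if_neg hrs, if_neg hrs, mul_zero]
    rw [Finset.sum_congr rfl hent]
    by_cases hrs : a + r = s
    · simp only [if_pos hrs]
      rw [← Finset.sum_div, hT, filt_sum a ha (b + s)]
      have e1 : (b + s = 0) ↔ (s = b) := by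
        constructor
        · intro h
          have h' : s = -b := eq_neg_of_add_eq_zero_right h
          rw [h']; funext m; exact (by decide : ∀ x : ZMod 2, -x = x) (b m)
        · intro h; rw [h]; exact vself b
      have e2 : (b + s = a) ↔ (s = a + b) := by
        constructor
        · intro h
          have h' : b + (b + s) = b + a := by rw [h]
          rw [← add_assoc, vself, zero_add] at h'
          exact h'.trans (add_comm b a)
        · intro h; rw [h, add_comm a b, ← add_assoc, vself, zero_add]
      have h2M : (2:ℂ)^(M-1) ≠ 0 := pow_ne_zero _ two_ne_zero
      have c1 : (a + r = b ∧ s = b) ↔ (s = b) := by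
        constructor
        · exact fun h => h.2
        · intro h; exact ⟨hrs.trans h, h⟩
      have c2 : (a + r = a + b ∧ s = a + b) ↔ (s = a + b) := by
        constructor
        · exact fun h => h.2
        · intro h; exact ⟨hrs.trans h, h⟩
      simp only [Pstr, Matrix.add_apply, Matrix.of_apply, c1, c2, e1, e2]
      field_simp
    · simp only [if_neg hrs, Finset.sum_const_zero]
      simp only [Pstr, Matrix.add_apply, Matrix.of_apply]
      rw [if_neg, if_neg, add_zero]
      · rintro ⟨h1, h2⟩
        exact hrs (h1.trans h2.symm)
      · rintro ⟨h1, h2⟩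
        exact hrs (h1.trans h2.symm)
  · -- pairwise commutation
    rintro ⟨x, c⟩ hp ⟨y, c'⟩ hq
    simp only [Finset.mem_product, Finset.mem_singleton, hT, Finset.mem_filter] at hp hq
    obtain ⟨hx, -, hc⟩ := hp
    obtain ⟨hy, -, hc'⟩ := hq
    show Commute (PauliStr x c) (PauliStr y c')
    rw [hx, hy]
    exact pauli_commute a c c' hc hc'
end
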